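/- Let G ∈ ℝ^{n×n}, let U ∈ ℝ^{n×m} be a data matrix, ū = (1/m) U 𝟙 its column average, and P̄ = U − ū 𝟙ᵀ. The minimizers over W ∈ ℝ^{n×n}, b ∈ ℝ^n of J(W, b) = ‖G U − (W U + b 𝟙ᵀ)‖_F² include W* = G P̄ P̄†, b* = G (I − P̄ P̄†) ū, where P̄† is the Moore–Penrose pseudoinverse; i.e., J(W*, b*) ≤ J(W, b) for all W, b. -/
import Mathlib


open Matrix

/-- The four Moore–Penrose conditions characterizing the pseudoinverse. -/
def IsMoorePenroseInv {n m : ℕ} (A : Matrix (Fin n) (Fin m) ℝ)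
    (Adag : Matrix (Fin m) (Fin n) ℝ) : Prop :=
  A * Adag * A = A ∧ Adag * A * Adag = Adag ∧
    (A * Adag)ᵀ = A * Adag ∧ (Adag * A)ᵀ = Adag * A

lemma vecMulVec_mulVec {n m k : ℕ} (A : Matrix (Fin n) (Fin m) ℝ) (v : Fin m → ℝ)
    (w : Fin k → ℝ) : vecMulVec (A.mulVec v) w = A * vecMulVec v w := by
  ext i j
  simp [vecMulVec_apply, mulVec, dotProduct, mul_apply, Finset.sum_mul, mul_assoc]

/-- The pair `W* = G P̄ P̄†`, `b* = G (I − P̄ P̄†) ū` minimizes the squared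
Frobenius-norm loss `J(W,b) = ‖GU − (WU + b𝟙ᵀ)‖_F²` over all `W, b`. -/
theorem stmt_6 {n m : ℕ} (G : Matrix (Fin n) (Fin n) ℝ) (U : Matrix (Fin n) (Fin m) ℝ)
    (ubar : Fin n → ℝ) (hubar : ubar = (1 / (m : ℝ)) • U.mulVec (fun _ => 1))
    (Pbar : Matrix (Fin n) (Fin m) ℝ) (hPbar : Pbar = U - vecMulVec ubar (fun _ => 1))
    (Pdag : Matrix (Fin m) (Fin n) ℝ) (hPdag : IsMoorePenroseInv Pbar Pdag)
    (J : Matrix (Fin n) (Fin n) ℝ → (Fin n → ℝ) → ℝ)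
    (hJ : ∀ W b, J W b =
      ((G * U - (W * U + vecMulVec b (fun _ => 1)))ᵀ *
        (G * U - (W * U + vecMulVec b (fun _ => 1)))).trace)
    (Wstar : Matrix (Fin n) (Fin n) ℝ) (hW : Wstar = G * Pbar * Pdag)
    (bstar : Fin n → ℝ) (hb : bstar = (G * (1 - Pbar * Pdag)).mulVec ubar) :
    ∀ W b, J Wstar bstar ≤ J W b := by
  intro W b
  -- J is always nonnegative
  have hnonneg : 0 ≤ J W b := by
    rw [hJ]
    set R := G * U - (W * U + vecMulVec b (fun _ => 1))
    rw [Matrix.trace]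
    apply Finset.sum_nonneg
    intro i _
    rw [Matrix.diag_apply, mul_apply]
    apply Finset.sum_nonneg
    intro j _
    simp only [transpose_apply]
    exact mul_self_nonneg _
  -- the residual at the optimum is zero
  have hU : U = Pbar + vecMulVec ubar (fun _ => 1) := by
    rw [hPbar, sub_add_cancel]
  have hres : Wstar * U + vecMulVec bstar (fun _ => 1) = G * U := by
    rw [hW, hb, vecMulVec_mulVec]
    rw [hU]
    have h1 : Pbar * (Pdag * Pbar) = Pbar := by
      rw [← Matrix.mul_assoc]; exact hPdag.1
    simp only [Matrix.mul_add, Matrix.mul_sub, Matrix.sub_mul, Matrix.one_mul,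
      Matrix.mul_one, Matrix.mul_assoc, h1]
    abel
  have hzero : J Wstar bstar = 0 := by
    rw [hJ, hres, sub_self]
    simp
  rw [hzero]
  exact hnonneg
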